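/- Define the bounded bilinear map D on ℓ² ≅ ⊕_{j≥1} ℝ^{2^j} blockwise by D_j(u,v) = ⟨u, w_j⟩ M_j(π/4) v, where w_j ∈ ℝ^{2^j} has all entries 2^{−j/2}, and let α ∈ ℓ² be the vector with block components α_{j,k} = 1/(j·2^{j/2}) for 1 ≤ k ≤ 2^j (so Σ_j ‖α_j‖² = Σ_j 1/j² < ∞). For 1 ≤ k ≤ 2^j, set 𝒮_{j,k}(α) = sup{ |(D_j(v,v))_k| : v ∈ ℝ^{2^j}, |v_m| ≤ α_{j,m} for all m }. Then ‖𝒮_j(α)‖² = 1/j⁴ + (2^j − 1)/(16 j⁴) ≥ 2^j/(16 j⁴) for every j ≥ 1, and hence Σ_{j≥1} Σ_{k=1}^{2^j} 𝒮_{j,k}(α)² = ∞. Thus D is bounded from ℓ² × ℓ² to ℓ² (with ‖D(u,v)‖ ≤ ‖u‖‖v‖) but 𝒮(α) ∉ ℓ²: boundedness of D does not imply that the reverse-norm space is closed under the action of D. -/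

import Mathlib

open Matrix


/-- The equivalence `Fin 2^j ⊕ Fin 2^j ≃ Fin 2^(j+1)` used to assemble block matrices. -/
def pe (j : ℕ) : Fin (2 ^ j) ⊕ Fin (2 ^ j) ≃ Fin (2 ^ (j + 1)) :=
  finSumFinEquiv.trans (finCongr (by rw [pow_succ, mul_two] : (2 : ℕ) ^ (j + 1) = 2 ^ j + 2 ^ j).symm)

/-- The matrices `M_j(θ)`: `M_1(θ) = [[cos θ, sin θ], [sin θ, −cos θ]]` and
`M_{j+1}(θ)` is built from `M_j(θ)` in 2×2 block form. (`M_0` is a dummy value;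
all statements concern `j ≥ 1`.) -/
noncomputable def Mmat (θ : ℝ) : (j : ℕ) → Matrix (Fin (2 ^ j)) (Fin (2 ^ j)) ℝ
  | 0 => 1
  | 1 => Matrix.of ![![Real.cos θ, Real.sin θ], ![Real.sin θ, -Real.cos θ]]
  | (j + 2) => Matrix.reindex (pe (j + 1)) (pe (j + 1))
      (Matrix.fromBlocks
        (Real.cos θ • Mmat θ (j + 1)) (Real.sin θ • Mmat θ (j + 1))
        (Real.sin θ • Mmat θ (j + 1)) ((-Real.cos θ) • Mmat θ (j + 1)))
/-- The sup-sequence `𝒮_{j,k}(α)` for the blockwise bilinear map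
`D_j(u,v) = ⟨u, w_j⟩ M_j(π/4) v` (all entries of `w_j` equal `2^{−j/2}`) and the
vector `α` with block entries `α_{j,k} = 1/(j·2^{j/2})`:
`𝒮_{j,k}(α) = sup { |(D_j(v,v))_k| : v ∈ ℝ^{2^j}, |v_m| ≤ α_{j,m} }`. -/
noncomputable def S17 (j : ℕ) (k : Fin (2 ^ j)) : ℝ :=
  sSup {y : ℝ | ∃ v : Fin (2 ^ j) → ℝ,
    (∀ m, |v m| ≤ 1 / ((j : ℝ) * (2 : ℝ) ^ ((j : ℝ) / 2))) ∧
    y = |(∑ m, v m * (2 : ℝ) ^ (-(j : ℝ) / 2))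
          * (Mmat (Real.pi / 4) j).mulVec v k|}

noncomputable def cc (j : ℕ) : ℝ := (Real.sqrt 2 / 2) ^ j

lemma cc_pos (j : ℕ) : 0 < cc j := pow_pos (by positivity) j

lemma cc_sq (j : ℕ) : cc j ^ 2 = (1/2 : ℝ) ^ j := by
  rw [cc, ← pow_mul, mul_comm, pow_mul]
  congr 1
  rw [div_pow, Real.sq_sqrt (by norm_num : (2:ℝ) ≥ 0)]
  norm_num

lemma pe_inl_zero (j : ℕ) : pe j (Sum.inl 0) = 0 := by
  apply Fin.ext
  simp [pe]

lemma hcc_succ (j : ℕ) : cc (j + 1) = Real.sqrt 2 / 2 * cc j := by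
  rw [cc, cc, pow_succ]; ring

lemma pm1 (t y c : ℝ) (h : y = c ∨ y = -c) : t * y = t * c ∨ t * y = -(t * c) := by
  rcases h with h | h
  · exact Or.inl (by rw [h])
  · exact Or.inr (by rw [h]; ring)

lemma pm2 (t y c : ℝ) (h : y = c ∨ y = -c) : -t * y = t * c ∨ -t * y = -(t * c) := by
  rcases h with h | h
  · exact Or.inr (by rw [h]; ring)
  · exact Or.inl (by rw [h]; ring)

lemma Mkey : ∀ j : ℕ, 1 ≤ j →
    (∀ k m, Mmat (Real.pi/4) j k m = cc j ∨ Mmat (Real.pi/4) j k m = -cc j) ∧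
    (∀ m, Mmat (Real.pi/4) j 0 m = cc j) ∧
    (∀ k : Fin (2^j), k ≠ 0 → ∑ m, Mmat (Real.pi/4) j k m = 0) := by
  intro j
  induction j with
  | zero => omega
  | succ j ih =>
    intro _
    rcases Nat.eq_zero_or_pos j with hj | hj
    · subst hj
      refine ⟨?_, ?_, ?_⟩
      · intro k m
        fin_cases k <;> fin_cases m <;>
          simp [Mmat, cc, Real.cos_pi_div_four, Real.sin_pi_div_four]
      · intro m
        fin_cases m <;> simp [Mmat, cc, Real.cos_pi_div_four, Real.sin_pi_div_four]
      · intro k hk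
        fin_cases k
        · simp at hk
        · simp [Mmat, Fin.sum_univ_two, Real.cos_pi_div_four, Real.sin_pi_div_four]
    · obtain ⟨i, rfl⟩ : ∃ i, j = i + 1 := ⟨j - 1, by omega⟩
      obtain ⟨h1, h2, h3⟩ := ih (by omega)
      have hM : ∀ a b : Fin (2 ^ (i + 1 + 1)), Mmat (Real.pi/4) (i + 1 + 1) a b =
          Matrix.fromBlocks
            ((Real.sqrt 2 / 2) • Mmat (Real.pi/4) (i+1)) ((Real.sqrt 2 / 2) • Mmat (Real.pi/4) (i+1))
            ((Real.sqrt 2 / 2) • Mmat (Real.pi/4) (i+1)) ((-(Real.sqrt 2 / 2)) • Mmat (Real.pi/4) (i+1))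
            ((pe (i+1)).symm a) ((pe (i+1)).symm b) := by
        intro a b
        show (Matrix.reindex (pe (i+1)) (pe (i+1)) _) a b = _
        rw [Matrix.reindex_apply, Matrix.submatrix_apply, Real.cos_pi_div_four,
          Real.sin_pi_div_four]
      refine ⟨?_, ?_, ?_⟩
      · intro a b
        rw [hM]
        rcases (pe (i+1)).symm a with k | k <;> rcases (pe (i+1)).symm b with m | m <;>
          simp only [Matrix.fromBlocks_apply₁₁, Matrix.fromBlocks_apply₁₂,
            Matrix.fromBlocks_apply₂₁, Matrix.fromBlocks_apply₂₂, Matrix.smul_apply,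
            smul_eq_mul] <;> rw [hcc_succ (i+1)] <;>
          first
            | exact pm1 _ _ _ (h1 k m)
            | exact pm2 _ _ _ (h1 k m)
      · intro b
        have hs0 : (pe (i+1)).symm 0 = Sum.inl 0 := by
          rw [← pe_inl_zero (i+1), Equiv.symm_apply_apply]
        rw [hM, hs0]
        rcases (pe (i+1)).symm b with m | m <;>
          simp only [Matrix.fromBlocks_apply₁₁, Matrix.fromBlocks_apply₁₂, Matrix.smul_apply,
            smul_eq_mul, h2 m] <;> rw [hcc_succ (i+1)]
      · intro a ha
        rw [← Equiv.sum_comp (pe (i+1)) (fun b => Mmat (Real.pi/4) (i+1+1) a b),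
          Fintype.sum_sum_type]
        simp only [hM, Equiv.symm_apply_apply]
        rcases hx : (pe (i+1)).symm a with k | k
        · have hk : k ≠ 0 := by
            rintro rfl
            exact ha (by rw [← (pe (i+1)).apply_symm_apply a, hx, pe_inl_zero])
          simp only [Matrix.fromBlocks_apply₁₁, Matrix.fromBlocks_apply₁₂, Matrix.smul_apply,
            smul_eq_mul, ← Finset.mul_sum, h3 k hk]
          ring
        · simp only [Matrix.fromBlocks_apply₂₁, Matrix.fromBlocks_apply₂₂, Matrix.smul_apply,
            smul_eq_mul, ← Finset.mul_sum]
          ring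

lemma cc_eq_rpow (j : ℕ) : cc j = (2:ℝ) ^ (-(j:ℝ)/2) := by
  have h2 : (0:ℝ) < (2:ℝ) ^ (-(j:ℝ)/2) := Real.rpow_pos_of_pos two_pos _
  have hr : ((2:ℝ) ^ (-(j:ℝ)/2)) ^ 2 = (1/2:ℝ) ^ j := by
    rw [← Real.rpow_natCast ((2:ℝ) ^ (-(j:ℝ)/2)) 2, ← Real.rpow_mul (by norm_num)]
    rw [show (-(j:ℝ)/2 * (2:ℕ)) = -(j:ℝ) by push_cast; ring]
    rw [Real.rpow_neg (by norm_num), Real.rpow_natCast, one_div, inv_pow]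
  have h1 := cc_sq j
  nlinarith [cc_pos j, h2, sq_nonneg (cc j - (2:ℝ) ^ (-(j:ℝ)/2))]

lemma Msymm (θ : ℝ) : ∀ j, (Mmat θ j)ᵀ = Mmat θ j := by
  intro j
  induction j with
  | zero => exact Matrix.transpose_one
  | succ j ih =>
    match j, ih with
    | 0, _ =>
      ext a b
      fin_cases a <;> fin_cases b <;> simp [Mmat, Matrix.transpose_apply]
    | (i+1), ih =>
      show (Matrix.reindex (pe (i+1)) (pe (i+1)) _)ᵀ = _
      rw [Matrix.reindex_apply, Matrix.transpose_submatrix, Matrix.fromBlocks_transpose]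
      simp only [Matrix.transpose_smul, ih]
      rfl

lemma Msq : ∀ j, Mmat (Real.pi/4) j * Mmat (Real.pi/4) j = 1 := by
  intro j
  induction j with
  | zero => exact Matrix.one_mul 1
  | succ j ih =>
    match j, ih with
    | 0, _ =>
      have h2 : Real.sqrt 2 * Real.sqrt 2 = 2 := Real.mul_self_sqrt (by norm_num)
      ext a b
      fin_cases a <;> fin_cases b <;>
        simp [Mmat, Matrix.mul_apply, Fin.sum_univ_two, Real.cos_pi_div_four,
          Real.sin_pi_div_four, Matrix.one_apply] <;> nlinarith [h2]
    | (i+1), ih =>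
      show (Matrix.reindex (pe (i+1)) (pe (i+1)) _) * (Matrix.reindex (pe (i+1)) (pe (i+1)) _) = _
      rw [Matrix.reindex_apply, Matrix.submatrix_mul_equiv, Matrix.fromBlocks_multiply]
      have hc : Real.cos (Real.pi/4) = Real.sqrt 2 / 2 := Real.cos_pi_div_four
      have hs : Real.sin (Real.pi/4) = Real.sqrt 2 / 2 := Real.sin_pi_div_four
      have h2 : Real.sqrt 2 * Real.sqrt 2 = 2 := Real.mul_self_sqrt (by norm_num)
      rw [hc, hs]
      have ha : (Real.sqrt 2 / 2) * (Real.sqrt 2 / 2) = 1/2 := by nlinarith [h2]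
      simp only [Matrix.smul_mul, Matrix.mul_smul, ih, smul_smul, mul_neg, neg_mul,
        neg_neg, ha, ← add_smul]
      norm_num

lemma mulVec_norm (j : ℕ) (x : Fin (2^j) → ℝ) :
    ∑ k, ((Mmat (Real.pi/4) j).mulVec x k)^2 = ∑ k, x k ^ 2 := by
  have h2 : ((Mmat (Real.pi/4) j) *ᵥ x) ᵥ* (Mmat (Real.pi/4) j) = x := by
    rw [← Matrix.mulVec_transpose, Msymm, Matrix.mulVec_mulVec, Msq, Matrix.one_mulVec]
  have h1 : ((Mmat (Real.pi/4) j) *ᵥ x) ⬝ᵥ ((Mmat (Real.pi/4) j) *ᵥ x) = x ⬝ᵥ x := by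
    rw [Matrix.dotProduct_mulVec, h2]
  simpa [dotProduct, pow_two] using h1


lemma alf_eq (j : ℕ) (hj : 1 ≤ j) :
    (1:ℝ) / ((j : ℝ) * (2 : ℝ) ^ ((j : ℝ) / 2)) = cc j / j := by
  have hj0 : (0:ℝ) < j := by exact_mod_cast hj
  have hcc : (2:ℝ) ^ ((j:ℝ)/2) = (cc j)⁻¹ := by
    rw [cc_eq_rpow, neg_div, Real.rpow_neg (by norm_num), inv_inv]
  rw [hcc]
  have h := cc_pos j
  field_simp

lemma hcn (j : ℕ) : cc j ^ 2 * (2:ℝ)^j = 1 := by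
  rw [cc_sq, ← mul_pow]; norm_num

lemma sum_abs_le_on {n : ℕ} (s : Finset (Fin n)) (v : Fin n → ℝ) (β : ℝ)
    (h : ∀ m, |v m| ≤ β) : |∑ m ∈ s, v m| ≤ s.card * β := by
  calc |∑ m ∈ s, v m| ≤ ∑ m ∈ s, |v m| := Finset.abs_sum_le_sum_abs _ _
    _ ≤ ∑ _m ∈ s, β := Finset.sum_le_sum fun m _ => h m
    _ = s.card * β := by rw [Finset.sum_const, nsmul_eq_mul]

lemma S17_zero (j : ℕ) (hj : 1 ≤ j) : S17 j 0 = 1/(j:ℝ)^2 := by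
  have hj0 : (0:ℝ) < j := by exact_mod_cast hj
  have hcp := cc_pos j
  have hone := hcn j
  obtain ⟨h1, h2, h3⟩ := Mkey j hj
  have hw : (2 : ℝ) ^ (-(j:ℝ)/2) = cc j := (cc_eq_rpow j).symm
  have hA : ∀ v : Fin (2^j) → ℝ,
      (Mmat (Real.pi/4) j).mulVec v 0 = ∑ m, cc j * v m := by
    intro v
    simp only [Matrix.mulVec, dotProduct]
    exact Finset.sum_congr rfl fun m _ => by rw [h2 m]
  rw [S17]
  apply IsGreatest.csSup_eq
  constructor
  · refine ⟨fun _ => cc j / j, fun m => ?_, ?_⟩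
    · rw [abs_of_nonneg (le_of_lt (div_pos hcp hj0)), alf_eq j hj]
    · rw [hw, hA]
      simp only [Finset.sum_const, Finset.card_univ, Fintype.card_fin, nsmul_eq_mul]
      have hone2 : (cc j ^ 2 * (2:ℝ)^j)^2 = 1 := by rw [hone]; norm_num
      have hpos2 : (0:ℝ) < ((2^j : ℕ) : ℝ) := by positivity
      rw [abs_of_nonneg (le_of_lt (mul_pos (mul_pos hpos2 (mul_pos (div_pos hcp hj0) hcp))
        (mul_pos hpos2 (mul_pos hcp (div_pos hcp hj0)))))]
      push_cast
      field_simp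
      nlinarith [hone2]
  · rintro y ⟨v, hv, rfl⟩
    have hb : ∀ m, |v m| ≤ cc j / j := fun m => le_of_le_of_eq (hv m) (alf_eq j hj)
    rw [hw, hA, abs_mul]
    have hcard : ((Finset.univ : Finset (Fin (2^j))).card : ℝ) = (2:ℝ)^j := by
      simp
    have b1 : |∑ m, v m * cc j| ≤ (2:ℝ)^j * (cc j / j * cc j) := by
      calc |∑ m, v m * cc j| ≤ ∑ m, |v m * cc j| := Finset.abs_sum_le_sum_abs _ _
        _ ≤ ∑ _m : Fin (2^j), cc j / j * cc j := Finset.sum_le_sum fun m _ => by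
            rw [abs_mul, abs_of_pos hcp]
            exact mul_le_mul_of_nonneg_right (hb m) hcp.le
        _ = (2:ℝ)^j * (cc j / j * cc j) := by
            rw [Finset.sum_const, nsmul_eq_mul, hcard]
    have b2 : |∑ m, cc j * v m| ≤ (2:ℝ)^j * (cc j / j * cc j) := by
      calc |∑ m, cc j * v m| ≤ ∑ m, |cc j * v m| := Finset.abs_sum_le_sum_abs _ _
        _ ≤ ∑ _m : Fin (2^j), cc j / j * cc j := Finset.sum_le_sum fun m _ => by
            rw [abs_mul, abs_of_pos hcp, mul_comm]
            exact mul_le_mul_of_nonneg_right (hb m) hcp.le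
        _ = (2:ℝ)^j * (cc j / j * cc j) := by
            rw [Finset.sum_const, nsmul_eq_mul, hcard]
    calc |∑ m, v m * cc j| * |∑ m, cc j * v m|
        ≤ ((2:ℝ)^j * (cc j / j * cc j)) * ((2:ℝ)^j * (cc j / j * cc j)) :=
          mul_le_mul b1 b2 (abs_nonneg _) (by positivity)
      _ = 1/(j:ℝ)^2 := by
          have hone2 : (cc j ^ 2 * (2:ℝ)^j)^2 = 1 := by rw [hone]; norm_num
          field_simp
          nlinarith [hone2]

set_option maxHeartbeats 1000000 in
lemma S17_ne (j : ℕ) (hj : 1 ≤ j) (k : Fin (2^j)) (hk : k ≠ 0) :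
    S17 j k = 1/(4*(j:ℝ)^2) := by
  classical
  have hj0 : (0:ℝ) < j := by exact_mod_cast hj
  have hcp := cc_pos j
  have hone := hcn j
  have hone2 : (cc j ^ 2 * (2:ℝ)^j)^2 = 1 := by rw [hcn j]; norm_num
  obtain ⟨h1, h2, h3⟩ := Mkey j hj
  have hw : (2 : ℝ) ^ (-(j:ℝ)/2) = cc j := (cc_eq_rpow j).symm
  set P : Finset (Fin (2^j)) :=
    Finset.univ.filter (fun m => Mmat (Real.pi/4) j k m = cc j) with hPdef
  set Q : Finset (Fin (2^j)) :=
    Finset.univ.filter (fun m => ¬ (Mmat (Real.pi/4) j k m = cc j)) with hQdef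
  have hPmem : ∀ m ∈ P, Mmat (Real.pi/4) j k m = cc j :=
    fun m hm => (Finset.mem_filter.mp hm).2
  have hQmem : ∀ m ∈ Q, Mmat (Real.pi/4) j k m = -cc j := by
    intro m hm
    rcases h1 k m with h | h
    · exact absurd h (Finset.mem_filter.mp hm).2
    · exact h
  -- cardinality of P
  have hsplit := Finset.sum_filter_add_sum_filter_not Finset.univ
    (fun m => Mmat (Real.pi/4) j k m = cc j) (fun m => Mmat (Real.pi/4) j k m)
  rw [h3 k hk, Finset.sum_congr rfl hPmem, Finset.sum_congr rfl hQmem] at hsplit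
  rw [Finset.sum_const, Finset.sum_const, nsmul_eq_mul, nsmul_eq_mul] at hsplit
  have hQP : (Q.card : ℝ) = P.card := by
    have : (Q.card : ℝ) * cc j = P.card * cc j := by
      have := hsplit
      nlinarith [hsplit]
    exact mul_right_cancel₀ (ne_of_gt hcp) this
  have hcardsum := Finset.card_filter_add_card_filter_not (s := (Finset.univ : Finset (Fin (2^j))))
    (p := fun m => Mmat (Real.pi/4) j k m = cc j)
  have hcard2 : (P.card : ℝ) * 2 = (2:ℝ)^j := by
    have hc : ((P.card + Q.card : ℕ) : ℝ) = ((2^j : ℕ) : ℝ) := by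
      rw [hcardsum]; simp
    push_cast at hc
    linarith [hQP]
  have hq4 : 4*((P.card:ℝ))^2*cc j^4 = 1 := by
    have h' : (cc j^2 * ((P.card:ℝ)*2))^2 = 1 := by rw [hcard2]; exact hone2
    nlinarith [h']
  -- decomposition of the value for arbitrary v
  have hMv : ∀ v : Fin (2^j) → ℝ, (Mmat (Real.pi/4) j).mulVec v k
      = cc j * (∑ m ∈ P, v m) - cc j * (∑ m ∈ Q, v m) := by
    intro v
    simp only [Matrix.mulVec, dotProduct]
    rw [← Finset.sum_filter_add_sum_filter_not Finset.univ
      (fun m => Mmat (Real.pi/4) j k m = cc j) (fun m => Mmat (Real.pi/4) j k m * v m),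
      ← hPdef, ← hQdef]
    have e1 : (∑ m ∈ P, Mmat (Real.pi/4) j k m * v m) = ∑ m ∈ P, cc j * v m :=
      Finset.sum_congr rfl (fun m hm => by rw [hPmem m hm])
    have e2 : (∑ m ∈ Q, Mmat (Real.pi/4) j k m * v m) = ∑ m ∈ Q, -cc j * v m :=
      Finset.sum_congr rfl (fun m hm => by rw [hQmem m hm])
    rw [e1, e2, ← Finset.mul_sum]
    have e3 : ∑ m ∈ Q, -cc j * v m = -(cc j * ∑ m ∈ Q, v m) := by
      rw [← Finset.mul_sum]; ring
    rw [e3]; ring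
  have hVsum : ∀ v : Fin (2^j) → ℝ, ∑ m, v m = (∑ m ∈ P, v m) + (∑ m ∈ Q, v m) :=
    fun v => (Finset.sum_filter_add_sum_filter_not Finset.univ _ v).symm
  rw [S17]
  apply IsGreatest.csSup_eq
  constructor
  · -- witness
    refine ⟨fun m => if Mmat (Real.pi/4) j k m = cc j then cc j / j else 0, fun m => ?_, ?_⟩
    · rw [alf_eq j hj]
      by_cases h : Mmat (Real.pi/4) j k m = cc j <;> simp [h]
      · rw [abs_of_nonneg (le_of_lt (div_pos hcp hj0))]
      · exact le_of_lt (div_pos hcp hj0)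
    · rw [hw, ← Finset.sum_mul, hMv, hVsum]
      have hsP : ∑ m ∈ P, (if Mmat (Real.pi/4) j k m = cc j then cc j / j else 0)
          = P.card * (cc j / j) := by
        rw [Finset.sum_congr rfl (fun m hm => if_pos (hPmem m hm)), Finset.sum_const,
          nsmul_eq_mul]
      have hsQ : ∑ m ∈ Q, (if Mmat (Real.pi/4) j k m = cc j then cc j / j else 0) = 0 := by
        rw [Finset.sum_congr rfl (fun m hm => if_neg (Finset.mem_filter.mp hm).2),
          Finset.sum_const, smul_zero]
      rw [hsP, hsQ]
      have hp : (0:ℝ) ≤ (P.card : ℝ) := Nat.cast_nonneg _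
      have hd := (div_pos hcp hj0).le
      rw [abs_of_nonneg]
      · field_simp
        nlinarith [hq4, sq_nonneg ((j:ℝ))]
      · nlinarith [mul_nonneg (mul_nonneg hp hd) hcp.le,
          mul_nonneg hcp.le (mul_nonneg hp hd)]
  · rintro y ⟨v, hv, rfl⟩
    have hb : ∀ m, |v m| ≤ cc j / j := fun m => le_of_le_of_eq (hv m) (alf_eq j hj)
    rw [hw, ← Finset.sum_mul, hMv, hVsum]
    have hAb : |∑ m ∈ P, v m| ≤ P.card * (cc j / j) := sum_abs_le_on P v _ hb
    have hBb : |∑ m ∈ Q, v m| ≤ P.card * (cc j / j) := by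
      have := sum_abs_le_on Q v _ hb
      rwa [hQP] at this
    set A := ∑ m ∈ P, v m
    set B := ∑ m ∈ Q, v m
    have hA2 : A^2 ≤ ((P.card:ℝ) * (cc j / j))^2 := by
      rw [← sq_abs A]
      exact pow_le_pow_left₀ (abs_nonneg _) hAb 2
    have hB2 : B^2 ≤ ((P.card:ℝ) * (cc j / j))^2 := by
      rw [← sq_abs B]
      exact pow_le_pow_left₀ (abs_nonneg _) hBb 2
    have key : |(A + B) * cc j * (cc j * A - cc j * B)| = cc j^2 * |A^2 - B^2| := by
      rw [show (A + B) * cc j * (cc j * A - cc j * B) = cc j^2 * (A^2 - B^2) by ring,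
        abs_mul, abs_of_pos (pow_pos hcp 2)]
    rw [key]
    have habs : |A^2 - B^2| ≤ ((P.card:ℝ) * (cc j / j))^2 := by
      rw [abs_le]
      constructor
      · linarith [hB2, sq_nonneg A]
      · linarith [hA2, sq_nonneg B]
    calc cc j^2 * |A^2 - B^2| ≤ cc j^2 * ((P.card:ℝ) * (cc j / j))^2 :=
          mul_le_mul_of_nonneg_left habs (le_of_lt (pow_pos hcp 2))
      _ = 1/(4*(j:ℝ)^2) := by
          field_simp
          nlinarith [hq4, sq_nonneg ((j:ℝ))]

lemma S17_sum (j : ℕ) (hj : 1 ≤ j) :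
    ∑ k, (S17 j k)^2 = 1/(j:ℝ)^4 + ((2:ℝ)^j - 1)/(16*(j:ℝ)^4) := by
  have hj0 : (0:ℝ) < j := by exact_mod_cast hj
  rw [← Finset.sum_erase_add _ _ (Finset.mem_univ (0 : Fin (2^j)))]
  rw [S17_zero j hj]
  have h : ∀ k ∈ Finset.univ.erase (0 : Fin (2^j)), (S17 j k)^2 = 1/(16*(j:ℝ)^4) := by
    intro k hk
    rw [S17_ne j hj k (Finset.ne_of_mem_erase hk)]
    field_simp; ring
  rw [Finset.sum_congr rfl h, Finset.sum_const, nsmul_eq_mul,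
    Finset.card_erase_of_mem (Finset.mem_univ _), Finset.card_univ, Fintype.card_fin]
  have h1 : (1:ℕ) ≤ 2^j := Nat.one_le_two_pow
  have hcast : (((2^j - 1 : ℕ)) : ℝ) = (2:ℝ)^j - 1 := by
    push_cast [h1]
    ring
  rw [hcast]
  field_simp
  ring

lemma S17_lb (j : ℕ) (hj : 1 ≤ j) :
    (2:ℝ)^j / (16*(j:ℝ)^4) ≤ ∑ k, (S17 j k)^2 := by
  have hj0 : (0:ℝ) < j := by exact_mod_cast hj
  rw [S17_sum j hj]
  have e : (1:ℝ)/(j:ℝ)^4 + ((2:ℝ)^j - 1)/(16*(j:ℝ)^4) - (2:ℝ)^j/(16*(j:ℝ)^4)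
      = 15/(16*(j:ℝ)^4) := by field_simp; ring
  have h15 : (0:ℝ) ≤ 15/(16*(j:ℝ)^4) := by positivity
  linarith [e, h15]

lemma nat_pow_ge : ∀ m : ℕ, 26 ≤ m → 16 * m^4 ≤ 2^m := by
  intro m
  induction m with
  | zero => omega
  | succ m ih =>
    intro hm
    rcases Nat.lt_or_ge m 26 with h | h
    · obtain rfl : m = 25 := by omega
      norm_num
    · have h1 := ih h
      have h2 : 16*(m+1)^4 ≤ 2*(16*m^4) := by
        nlinarith [Nat.mul_le_mul_right (m^3) h, Nat.mul_le_mul_right (m^2) h,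
          Nat.mul_le_mul_right m h, h]
      calc 16*(m+1)^4 ≤ 2*(16*m^4) := h2
        _ ≤ 2*2^m := by omega
        _ = 2^(m+1) := by rw [pow_succ]; ring

lemma S17_not_summable : ¬ Summable (fun j : ℕ => ∑ k, (S17 (j + 1) k) ^ 2) := by
  intro h
  have h0 := h.tendsto_atTop_zero
  have h1 : ∀ᶠ jj in Filter.atTop, (∑ k, (S17 (jj+1) k)^2) < 1 :=
    h0.eventually (gt_mem_nhds (by norm_num : (0:ℝ) < 1))
  obtain ⟨m, hm1, hm2⟩ := (h1.and (Filter.eventually_ge_atTop 26)).exists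
  have hge := S17_lb (m+1) (by omega)
  have hn : (16 * (m+1)^4 : ℕ) ≤ 2^(m+1) := nat_pow_ge (m+1) (by omega)
  have hr : (1:ℝ) ≤ (2:ℝ)^(m+1) / (16*(((m+1):ℕ):ℝ)^4) := by
    rw [le_div_iff₀ (by positivity)]
    have hc : ((16*(m+1)^4 : ℕ):ℝ) ≤ ((2^(m+1) : ℕ):ℝ) := Nat.cast_le.mpr hn
    push_cast at hc ⊢
    linarith
  push_cast at hge hr
  linarith [hge, hr, hm1]

lemma hwj (j : ℕ) : (2:ℝ)^(-((j:ℝ)+1)/2) = cc (j+1) := by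
  rw [cc_eq_rpow]
  congr 1
  push_cast
  ring

lemma cc_sum_sq (j : ℕ) : ∑ _i : Fin (2^(j+1)), cc (j+1)^2 = 1 := by
  rw [Finset.sum_const, Finset.card_univ, Fintype.card_fin, nsmul_eq_mul]
  have h := hcn (j+1)
  push_cast
  linarith

theorem bounded_part (u v : (j : ℕ) → Fin (2 ^ (j + 1)) → ℝ)
    (hu : Summable (fun j => ∑ i, (u j i) ^ 2)) (hv : Summable (fun j => ∑ i, (v j i) ^ 2)) :
    Summable (fun j => ∑ k, ((∑ m, u j m * (2 : ℝ) ^ (-((j : ℝ) + 1) / 2))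
        * (Mmat (Real.pi / 4) (j + 1)).mulVec (v j) k) ^ 2) ∧
    Real.sqrt (∑' j : ℕ, ∑ k, ((∑ m, u j m * (2 : ℝ) ^ (-((j : ℝ) + 1) / 2))
        * (Mmat (Real.pi / 4) (j + 1)).mulVec (v j) k) ^ 2)
      ≤ Real.sqrt (∑' j : ℕ, ∑ i, (u j i) ^ 2)
        * Real.sqrt (∑' j : ℕ, ∑ i, (v j i) ^ 2) := by
  set A : ℕ → ℝ := fun j => ∑ i, (u j i)^2 with hAdef
  set B : ℕ → ℝ := fun j => ∑ i, (v j i)^2 with hBdef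
  have hA0 : ∀ j, 0 ≤ A j := fun j => Finset.sum_nonneg fun i _ => sq_nonneg _
  have hB0 : ∀ j, 0 ≤ B j := fun j => Finset.sum_nonneg fun i _ => sq_nonneg _
  have ht : ∀ j, (∑ k, ((∑ m, u j m * (2 : ℝ) ^ (-((j : ℝ) + 1) / 2))
      * (Mmat (Real.pi / 4) (j + 1)).mulVec (v j) k) ^ 2)
      = (∑ m, u j m * (2 : ℝ) ^ (-((j : ℝ) + 1) / 2))^2 * B j := by
    intro j
    rw [show B j = ∑ k, ((Mmat (Real.pi / 4) (j+1)).mulVec (v j)) k ^2 from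
      (mulVec_norm (j+1) (v j)).symm]
    rw [Finset.mul_sum]
    exact Finset.sum_congr rfl fun k _ => by ring
  have hC : ∀ j, (∑ m, u j m * (2 : ℝ) ^ (-((j : ℝ) + 1) / 2))^2 ≤ A j := by
    intro j
    have hcs := Finset.sum_mul_sq_le_sq_mul_sq Finset.univ (u j) (fun _ => cc (j+1))
    calc (∑ m, u j m * (2 : ℝ) ^ (-((j : ℝ) + 1) / 2))^2
        = (∑ m, u j m * cc (j+1))^2 := by rw [hwj]
      _ ≤ (∑ m, (u j m)^2) * (∑ _m : Fin (2^(j+1)), cc (j+1)^2) := hcs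
      _ = A j := by rw [cc_sum_sq]; simp [hAdef]
  have htb : ∀ j, (∑ k, ((∑ m, u j m * (2 : ℝ) ^ (-((j : ℝ) + 1) / 2))
      * (Mmat (Real.pi / 4) (j + 1)).mulVec (v j) k) ^ 2) ≤ A j * B j := by
    intro j
    rw [ht j]
    exact mul_le_mul_of_nonneg_right (hC j) (hB0 j)
  have hTB0 : 0 ≤ ∑' j, B j := tsum_nonneg hB0
  have hBle : ∀ j, B j ≤ ∑' i, B i := fun j => Summable.le_tsum hv j fun i _ => hB0 i
  have hle2 : ∀ j, (∑ k, ((∑ m, u j m * (2 : ℝ) ^ (-((j : ℝ) + 1) / 2))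
      * (Mmat (Real.pi / 4) (j + 1)).mulVec (v j) k) ^ 2) ≤ A j * (∑' i, B i) :=
    fun j => (htb j).trans (mul_le_mul_of_nonneg_left (hBle j) (hA0 j))
  have hsub : Summable (fun j => A j * (∑' i, B i)) := hu.mul_right _
  have hsumm : Summable (fun j => ∑ k, ((∑ m, u j m * (2 : ℝ) ^ (-((j : ℝ) + 1) / 2))
      * (Mmat (Real.pi / 4) (j + 1)).mulVec (v j) k) ^ 2) :=
    Summable.of_nonneg_of_le (fun j => Finset.sum_nonneg fun k _ => sq_nonneg _) hle2 hsub
  refine ⟨hsumm, ?_⟩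
  have hts : (∑' j, ∑ k, ((∑ m, u j m * (2 : ℝ) ^ (-((j : ℝ) + 1) / 2))
      * (Mmat (Real.pi / 4) (j + 1)).mulVec (v j) k) ^ 2) ≤ (∑' j, A j) * (∑' i, B i) := by
    calc (∑' j, ∑ k, ((∑ m, u j m * (2 : ℝ) ^ (-((j : ℝ) + 1) / 2))
        * (Mmat (Real.pi / 4) (j + 1)).mulVec (v j) k) ^ 2)
        ≤ ∑' j, A j * (∑' i, B i) := Summable.tsum_le_tsum hle2 hsumm hsub
      _ = (∑' j, A j) * (∑' i, B i) := tsum_mul_right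
  calc Real.sqrt (∑' j, ∑ k, ((∑ m, u j m * (2 : ℝ) ^ (-((j : ℝ) + 1) / 2))
      * (Mmat (Real.pi / 4) (j + 1)).mulVec (v j) k) ^ 2)
      ≤ Real.sqrt ((∑' j, A j) * (∑' i, B i)) := Real.sqrt_le_sqrt hts
    _ = Real.sqrt (∑' j, A j) * Real.sqrt (∑' i, B i) :=
        Real.sqrt_mul (tsum_nonneg hA0) _

/-- The blockwise bilinear map `D` built from `M_j(π/4)` is bounded
on `ℓ² ≅ ⊕_{j≥1} ℝ^{2^j}` with `‖D(u,v)‖ ≤ ‖u‖‖v‖`, yet for the vector `α ∈ ℓ²` with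
block entries `1/(j·2^{j/2})` one has
`‖𝒮_j(α)‖² = 1/j⁴ + (2^j − 1)/(16 j⁴) ≥ 2^j/(16 j⁴)` for all `j ≥ 1`, so that
`𝒮(α) ∉ ℓ²`: boundedness of `D` does not imply that the reverse-norm space is closed
under the action of `D`. -/
theorem stmt17 :
    -- `D` is bounded on `ℓ² ≅ ⊕_{j ≥ 1} ℝ^{2^j}` (blocks indexed by `j+1`, `j : ℕ`):
    (∀ u v : (j : ℕ) → Fin (2 ^ (j + 1)) → ℝ,
      Summable (fun j => ∑ i, (u j i) ^ 2) → Summable (fun j => ∑ i, (v j i) ^ 2) →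
      Summable (fun j => ∑ k, ((∑ m, u j m * (2 : ℝ) ^ (-((j : ℝ) + 1) / 2))
          * (Mmat (Real.pi / 4) (j + 1)).mulVec (v j) k) ^ 2) ∧
      Real.sqrt (∑' j : ℕ, ∑ k, ((∑ m, u j m * (2 : ℝ) ^ (-((j : ℝ) + 1) / 2))
          * (Mmat (Real.pi / 4) (j + 1)).mulVec (v j) k) ^ 2)
        ≤ Real.sqrt (∑' j : ℕ, ∑ i, (u j i) ^ 2)
          * Real.sqrt (∑' j : ℕ, ∑ i, (v j i) ^ 2)) ∧
    -- the block norms of `𝒮(α)`: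
    (∀ j : ℕ, 1 ≤ j →
      (∑ k, (S17 j k) ^ 2
        = 1 / (j : ℝ) ^ 4 + ((2 : ℝ) ^ j - 1) / (16 * (j : ℝ) ^ 4)) ∧
      (2 : ℝ) ^ j / (16 * (j : ℝ) ^ 4) ≤ ∑ k, (S17 j k) ^ 2) ∧
    -- hence `𝒮(α) ∉ ℓ²`:
    ¬ Summable (fun j : ℕ => ∑ k, (S17 (j + 1) k) ^ 2) := by
  refine ⟨fun u v hu hv => bounded_part u v hu hv, fun j hj => ⟨?_, S17_lb j hj⟩,
    S17_not_summable⟩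
  exact S17_sum j hj
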